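/- arXiv:2107.12848 — 4 statements merged into one kernel-verified Lean document; each statement's English description precedes it below -/
import Mathlib

section
/- For R(p) = (Σᵢ pᵢλᵢuᵢ)/(1 + Σᵢ pᵢλᵢtᵢ) with λᵢ, tᵢ > 0, uᵢ ≥ 0, any maximizer p* over [0,1]ⁿ can be taken to have all coordinates in {0,1}; i.e., the maximum of R over [0,1]ⁿ is attained at a vertex of the cube. -/
/-- Generalized diet rate with consumption probabilities:
R(p) = (∑ᵢ pᵢλᵢuᵢ)/(1 + ∑ᵢ pᵢλᵢtᵢ). -/
noncomputable def probRate {n : ℕ} (l u t : Fin n → ℝ) (p : Fin n → ℝ) : ℝ :=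
  (∑ i, p i * l i * u i) / (1 + ∑ i, p i * l i * t i)

open Finset

lemma sum_update_mul {n : ℕ} (q : Fin n → ℝ) (a : Fin n) (x : ℝ) (g : Fin n → ℝ) :
    ∑ i, Function.update q a x i * g i = x * g a + ∑ i ∈ univ.erase a, q i * g i := by
  rw [← Finset.add_sum_erase Finset.univ (fun i => Function.update q a x i * g i)
      (Finset.mem_univ a)]
  congr 1
  · simp
  · exact Finset.sum_congr rfl fun i hi => by
      rw [Function.update_of_ne (Finset.ne_of_mem_erase hi)]

lemma round_coord {n : ℕ} (l u t : Fin n → ℝ)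
    (hl : ∀ i, 0 < l i) (hu : ∀ i, 0 ≤ u i) (ht : ∀ i, 0 < t i)
    (q : Fin n → ℝ) (hq : ∀ i, q i ∈ Set.Icc (0:ℝ) 1) (a : Fin n) :
    probRate l u t q ≤ probRate l u t (Function.update q a 0) ∨
    probRate l u t q ≤ probRate l u t (Function.update q a 1) := by
  set A := ∑ i ∈ univ.erase a, q i * (l i * u i) with hA
  set B := 1 + ∑ i ∈ univ.erase a, q i * (l i * t i) with hB
  set c := l a * u a with hc
  set d := l a * t a with hd
  have hA0 : 0 ≤ A := Finset.sum_nonneg fun i _ =>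
    mul_nonneg (hq i).1 (mul_nonneg (hl i).le (hu i))
  have hB1 : 1 ≤ B := le_add_of_nonneg_right <| Finset.sum_nonneg fun i _ =>
    mul_nonneg (hq i).1 (mul_nonneg (hl i).le (ht i).le)
  have hc0 : 0 ≤ c := mul_nonneg (hl a).le (hu a)
  have hd0 : 0 < d := mul_pos (hl a) (ht a)
  have key : ∀ x : ℝ, probRate l u t (Function.update q a x) = (A + x * c) / (B + x * d) := by
    intro x
    unfold probRate
    have h1 : ∑ i, Function.update q a x i * l i * u i = x * c + A := by
      simp only [mul_assoc]
      exact sum_update_mul q a x (fun i => l i * u i)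
    have h2 : ∑ i, Function.update q a x i * l i * t i = x * d + (B - 1) := by
      simp only [mul_assoc]
      rw [sum_update_mul q a x (fun i => l i * t i)]
      rw [hB, hd]; ring_nf
    rw [h1, h2]; ring_nf
  have hqx : probRate l u t q = (A + q a * c) / (B + q a * d) := by
    rw [← key (q a), Function.update_eq_self]
  have hx0 : 0 ≤ q a := (hq a).1
  have hx1 : q a ≤ 1 := (hq a).2
  have hden : 0 < B + q a * d := by nlinarith
  rcases le_or_gt (c * B) (A * d) with h | h
  · left
    rw [hqx, key 0]
    rw [div_le_div_iff₀ hden (by nlinarith)]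
    nlinarith
  · right
    rw [hqx, key 1]
    rw [div_le_div_iff₀ hden (by nlinarith)]
    nlinarith

lemma round_all {n : ℕ} (l u t : Fin n → ℝ)
    (hl : ∀ i, 0 < l i) (hu : ∀ i, 0 ≤ u i) (ht : ∀ i, 0 < t i)
    (S : Finset (Fin n)) :
    ∀ q : Fin n → ℝ, (∀ i, q i ∈ Set.Icc (0:ℝ) 1) → (∀ i ∉ S, q i = 0 ∨ q i = 1) →
      ∃ p : Fin n → ℝ, (∀ i, p i = 0 ∨ p i = 1) ∧ probRate l u t q ≤ probRate l u t p := by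
  induction S using Finset.induction with
  | empty =>
    intro q hq hbin
    exact ⟨q, fun i => hbin i (Finset.notMem_empty i), le_refl _⟩
  | @insert a S ha ih =>
    intro q hq hbin
    have step : ∀ x : ℝ, x = 0 ∨ x = 1 →
        probRate l u t q ≤ probRate l u t (Function.update q a x) →
        ∃ p : Fin n → ℝ, (∀ i, p i = 0 ∨ p i = 1) ∧ probRate l u t q ≤ probRate l u t p := by
      intro x hx hle
      obtain ⟨p, hp1, hp2⟩ := ih (Function.update q a x)
        (fun i => by
          rcases eq_or_ne i a with rfl | hne
          · rw [Function.update_self]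
            rcases hx with rfl | rfl <;> constructor <;> norm_num
          · rw [Function.update_of_ne hne]; exact hq i)
        (fun i hi => by
          rcases eq_or_ne i a with rfl | hne
          · rw [Function.update_self]; exact hx
          · rw [Function.update_of_ne hne]
            exact hbin i (by simp [Finset.mem_insert, hne, hi]))
      exact ⟨p, hp1, hle.trans hp2⟩
    rcases round_coord l u t hl hu ht q hq a with h | h
    · exact step 0 (Or.inl rfl) h
    · exact step 1 (Or.inr rfl) h

/-- The maximum of R over [0,1]ⁿ is attained at a vertex of the cube. -/
theorem probRate_max_at_vertex {n : ℕ} (l u t : Fin n → ℝ)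
    (hl : ∀ i, 0 < l i) (hu : ∀ i, 0 ≤ u i) (ht : ∀ i, 0 < t i) :
    ∃ p : Fin n → ℝ, (∀ i, p i = 0 ∨ p i = 1) ∧
      ∀ q : Fin n → ℝ, (∀ i, q i ∈ Set.Icc (0:ℝ) 1) → probRate l u t q ≤ probRate l u t p := by
  classical
  set v : (Fin n → Bool) → (Fin n → ℝ) := fun b i => if b i then 1 else 0 with hv
  obtain ⟨b, _, hb⟩ := Finset.exists_max_image (Finset.univ : Finset (Fin n → Bool))
    (fun b => probRate l u t (v b)) ⟨fun _ => true, Finset.mem_univ _⟩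
  refine ⟨v b, fun i => by by_cases h : b i <;> simp [hv, h], fun q hq => ?_⟩
  obtain ⟨p, hp1, hp2⟩ := round_all l u t hl hu ht Finset.univ q hq
    (fun i hi => absurd (Finset.mem_univ i) hi)
  have : p = v (fun i => if p i = 1 then true else false) := by
    funext i
    rcases hp1 i with h | h <;> simp [hv, h]
  calc probRate l u t q ≤ probRate l u t p := hp2
    _ ≤ _ := by rw [this]; exact hb _ (Finset.mem_univ _)
end

section
/- The zero-one strategy p* defined by pⱼ* = 1 iff uⱼ/tⱼ > R_{¬j}(p*), where R_{¬j}(p) = (Σ_{i≠j} pᵢλᵢuᵢ)/(1 + Σ_{i≠j} pᵢλᵢtᵢ), maximizes R over [0,1]ⁿ: for any maximizer p* and any j, if uⱼ/tⱼ > R_{¬j}(p*) then pⱼ* = 1, and if uⱼ/tⱼ < R_{¬j}(p*) then pⱼ* = 0. -/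
/-- Rate computed excluding item j: R_{¬j}(p). -/
noncomputable def probRateExcl {n : ℕ} (l u t : Fin n → ℝ) (j : Fin n) (p : Fin n → ℝ) : ℝ :=
  (∑ i ∈ Finset.univ.erase j, p i * l i * u i) /
    (1 + ∑ i ∈ Finset.univ.erase j, p i * l i * t i)

/-- Any maximizer of R over [0,1]ⁿ is the zero-one strategy: pⱼ* = 1 whenever
uⱼ/tⱼ > R_{¬j}(p*), and pⱼ* = 0 whenever uⱼ/tⱼ < R_{¬j}(p*). -/
theorem maximizer_is_zero_one {n : ℕ} (l u t : Fin n → ℝ)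
    (hl : ∀ i, 0 < l i) (hu : ∀ i, 0 ≤ u i) (ht : ∀ i, 0 < t i)
    (p : Fin n → ℝ) (hp : ∀ i, p i ∈ Set.Icc (0:ℝ) 1)
    (hmax : ∀ q : Fin n → ℝ, (∀ i, q i ∈ Set.Icc (0:ℝ) 1) →
      probRate l u t q ≤ probRate l u t p) (j : Fin n) :
    (u j / t j > probRateExcl l u t j p → p j = 1) ∧
    (u j / t j < probRateExcl l u t j p → p j = 0) := by
  set A := ∑ i ∈ Finset.univ.erase j, p i * l i * u i with hAdef
  set Bs := ∑ i ∈ Finset.univ.erase j, p i * l i * t i with hBdef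
  have hA0 : 0 ≤ A :=
    Finset.sum_nonneg fun i _ =>
      mul_nonneg (mul_nonneg (hp i).1 (hl i).le) (hu i)
  have hBs0 : 0 ≤ Bs :=
    Finset.sum_nonneg fun i _ =>
      mul_nonneg (mul_nonneg (hp i).1 (hl i).le) (ht i).le
  have hE : (0:ℝ) < 1 + Bs := by linarith
  have hc : 0 < l j := hl j
  -- sum splitting
  have hsum : ∀ (x : ℝ) (f : Fin n → ℝ),
      ∑ i, (Function.update p j x) i * l i * f i
        = x * l j * f j + ∑ i ∈ Finset.univ.erase j, p i * l i * f i := by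
    intro x f
    rw [← Finset.add_sum_erase _ _ (Finset.mem_univ j), Function.update_self]
    congr 1
    exact Finset.sum_congr rfl fun i hi => by
      rw [Function.update_of_ne (Finset.ne_of_mem_erase hi)]
  have hpsum : ∀ f : Fin n → ℝ,
      ∑ i, p i * l i * f i
        = p j * l j * f j + ∑ i ∈ Finset.univ.erase j, p i * l i * f i := by
    intro f
    have := hsum (p j) f
    rwa [Function.update_eq_self] at this
  have hpR : probRate l u t p
      = (p j * l j * u j + A) / ((1 + Bs) + p j * l j * t j) := by
    rw [probRate, hpsum u, hpsum t, ← hAdef, ← hBdef]; ring_nf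
  have hqR : ∀ x : ℝ, probRate l u t (Function.update p j x)
      = (x * l j * u j + A) / ((1 + Bs) + x * l j * t j) := by
    intro x
    rw [probRate, hsum x u, hsum x t, ← hAdef, ← hBdef]; ring_nf
  have hDen : ∀ x : ℝ, 0 ≤ x → 0 < (1 + Bs) + x * l j * t j := by
    intro x hx
    have : 0 ≤ x * l j * t j := mul_nonneg (mul_nonneg hx hc.le) (ht j).le
    linarith
  have hExcl : probRateExcl l u t j p = A / (1 + Bs) := rfl
  constructor
  · intro h
    rw [hExcl, gt_iff_lt, div_lt_div_iff₀ hE (ht j)] at h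
    -- h : A * t j < u j / ... : A * t j < u j * (1 + Bs)? check direction
    by_contra hne
    have hlt : p j < 1 := lt_of_le_of_ne (hp j).2 hne
    have hq : ∀ i, (Function.update p j 1) i ∈ Set.Icc (0:ℝ) 1 := by
      intro i
      by_cases hij : i = j
      · subst hij; simp
      · rw [Function.update_of_ne hij]; exact hp i
    have := hmax _ hq
    rw [hqR 1, hpR] at this
    rw [div_le_div_iff₀ (hDen 1 zero_le_one) (hDen (p j) (hp j).1)] at this
    nlinarith [mul_pos (mul_pos (sub_pos.2 hlt) hc) (sub_pos.2 h)]
  · intro h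
    rw [hExcl, div_lt_div_iff₀ (ht j) hE] at h
    by_contra hne
    have hlt : 0 < p j := lt_of_le_of_ne (hp j).1 (Ne.symm hne)
    have hq : ∀ i, (Function.update p j 0) i ∈ Set.Icc (0:ℝ) 1 := by
      intro i
      by_cases hij : i = j
      · subst hij; simp
      · rw [Function.update_of_ne hij]; exact hp i
    have := hmax _ hq
    rw [hqR 0, hpR] at this
    rw [div_le_div_iff₀ (hDen 0 le_rfl) (hDen (p j) (hp j).1)] at this
    nlinarith [mul_pos (mul_pos hlt hc) (sub_pos.2 h)]
end

section
/- Order item types so that u₁/t₁ ≥ u₂/t₂ ≥ … ≥ uₙ/tₙ, and let D_k = {1,…,k} with rate R_k = R(D_k). Then the sequence R_k is unimodal: there exists k* such that R_1 ≤ R_2 ≤ … ≤ R_{k*} and R_{k*} ≥ R_{k*+1} ≥ … ≥ R_n; moreover R_k increases when u_{k+1}/t_{k+1} ≥ R_k and decreases otherwise. -/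
private lemma rate_step1 (a b c p q : ℝ) (hb : 0 < b) (hc : 0 < c) (hq : 0 < q)
    (h : a / b ≤ p / q) : a / b ≤ (a + c * p) / (b + c * q) := by
  rw [div_le_div_iff₀ hb hq] at h
  rw [div_le_div_iff₀ hb (by positivity)]
  nlinarith

private lemma rate_step2 (a b c p q : ℝ) (hb : 0 < b) (hc : 0 < c) (hq : 0 < q)
    (h : p / q < a / b) : (a + c * p) / (b + c * q) < a / b := by
  rw [div_lt_div_iff₀ hq hb] at h
  rw [div_lt_div_iff₀ (by positivity) hb]
  nlinarith

private lemma rate_step3 (a b c p q : ℝ) (hb : 0 < b) (hc : 0 < c) (hq : 0 < q)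
    (h : p / q < a / b) : p / q < (a + c * p) / (b + c * q) := by
  rw [div_lt_div_iff₀ hq hb] at h
  rw [div_lt_div_iff₀ hq (by positivity)]
  nlinarith

private lemma sum_filter_succ {n : ℕ} (f : Fin n → ℝ) (k : ℕ) (h : k < n) :
    ∑ i ∈ Finset.univ.filter (fun i : Fin n => (i : ℕ) < k + 1), f i
      = (∑ i ∈ Finset.univ.filter (fun i : Fin n => (i : ℕ) < k), f i) + f ⟨k, h⟩ := by
  have hset : Finset.univ.filter (fun i : Fin n => (i : ℕ) < k + 1)
      = insert (⟨k, h⟩ : Fin n) (Finset.univ.filter (fun i : Fin n => (i : ℕ) < k)) := by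
    ext j
    simp [Fin.ext_iff]
    omega
  rw [hset, Finset.sum_insert (by simp)]
  ring

/-- Rate of the prefix diet {1,…,k} (0-indexed: items with index < k). -/
noncomputable def prefixRate {n : ℕ} (l u t : Fin n → ℝ) (k : ℕ) : ℝ :=
  (∑ i ∈ Finset.univ.filter (fun i : Fin n => (i : ℕ) < k), l i * u i) /
    (1 + ∑ i ∈ Finset.univ.filter (fun i : Fin n => (i : ℕ) < k), l i * t i)

/-- With items ordered by decreasing profitability, the sequence of prefix-diet rates
R_k is unimodal, and R_k increases exactly when the next item's profitability is at
least R_k. -/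
theorem prefixRate_unimodal {n : ℕ} (l u t : Fin n → ℝ)
    (hl : ∀ i, 0 < l i) (hu : ∀ i, 0 ≤ u i) (ht : ∀ i, 0 < t i)
    (horder : ∀ i j : Fin n, i ≤ j → u j / t j ≤ u i / t i) :
    (∃ kstar ≤ n,
      (∀ k₁ k₂, k₁ ≤ k₂ → k₂ ≤ kstar → prefixRate l u t k₁ ≤ prefixRate l u t k₂) ∧
      (∀ k₁ k₂, kstar ≤ k₁ → k₁ ≤ k₂ → k₂ ≤ n → prefixRate l u t k₂ ≤ prefixRate l u t k₁)) ∧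
    (∀ k, ∀ h : k < n,
      (u ⟨k, h⟩ / t ⟨k, h⟩ ≥ prefixRate l u t k →
        prefixRate l u t k ≤ prefixRate l u t (k + 1)) ∧
      (u ⟨k, h⟩ / t ⟨k, h⟩ < prefixRate l u t k →
        prefixRate l u t (k + 1) < prefixRate l u t k)) := by
  classical
  set R := prefixRate l u t with hR
  set A : ℕ → ℝ := fun k =>
    ∑ i ∈ Finset.univ.filter (fun i : Fin n => (i : ℕ) < k), l i * u i with hA
  set B : ℕ → ℝ := fun k =>
    1 + ∑ i ∈ Finset.univ.filter (fun i : Fin n => (i : ℕ) < k), l i * t i with hB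
  have hRk : ∀ k, R k = A k / B k := fun k => rfl
  have hBpos : ∀ k, 0 < B k := by
    intro k
    have : (0:ℝ) ≤ ∑ i ∈ Finset.univ.filter (fun i : Fin n => (i : ℕ) < k), l i * t i :=
      Finset.sum_nonneg fun i _ => le_of_lt (mul_pos (hl i) (ht i))
    simp only [hB]; linarith
  have hAsucc : ∀ k (h : k < n), A (k + 1) = A k + l ⟨k, h⟩ * u ⟨k, h⟩ := by
    intro k h; exact sum_filter_succ (fun i => l i * u i) k h
  have hBsucc : ∀ k (h : k < n), B (k + 1) = B k + l ⟨k, h⟩ * t ⟨k, h⟩ := by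
    intro k h
    simp only [hB, sum_filter_succ (fun i => l i * t i) k h]
    ring
  -- step lemmas in terms of R
  have stepUp : ∀ k (h : k < n), R k ≤ u ⟨k, h⟩ / t ⟨k, h⟩ → R k ≤ R (k + 1) := by
    intro k h hle
    rw [hRk, hRk, hAsucc k h, hBsucc k h]
    have := hl ⟨k, h⟩
    have h2 : A k / B k ≤ (A k + l ⟨k, h⟩ * (u ⟨k, h⟩)) / (B k + l ⟨k, h⟩ * (t ⟨k, h⟩)) :=
      rate_step1 _ _ _ _ _ (hBpos k) (hl _) (ht _) (by rw [hRk] at hle; exact hle)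
    exact h2
  have stepDown : ∀ k (h : k < n), u ⟨k, h⟩ / t ⟨k, h⟩ < R k → R (k + 1) < R k := by
    intro k h hlt
    rw [hRk, hRk, hAsucc k h, hBsucc k h]
    exact rate_step2 _ _ _ _ _ (hBpos k) (hl _) (ht _) (by rw [hRk] at hlt; exact hlt)
  have stepDown' : ∀ k (h : k < n), u ⟨k, h⟩ / t ⟨k, h⟩ < R k →
      u ⟨k, h⟩ / t ⟨k, h⟩ < R (k + 1) := by
    intro k h hlt
    rw [hRk, hAsucc k h, hBsucc k h]
    exact rate_step3 _ _ _ _ _ (hBpos k) (hl _) (ht _) (by rw [hRk] at hlt; exact hlt)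
  refine ⟨?_, fun k h => ⟨fun hge => stepUp k h hge, stepDown k h⟩⟩
  -- unimodality
  by_cases hP : ∃ k, ∃ h : k < n, u ⟨k, h⟩ / t ⟨k, h⟩ < R k
  case neg =>
    -- never decreases: kstar = n
    push_neg at hP
    refine ⟨n, le_refl n, ?_, ?_⟩
    · intro k₁ k₂ h12 h2n
      induction k₂ with
      | zero => simp_all
      | succ m ih =>
        rcases Nat.lt_or_ge k₁ (m + 1) with hlt | hge
        · have hmn : m < n := Nat.lt_of_succ_le h2n
          have h1 : R k₁ ≤ R m := ih (Nat.lt_succ_iff.mp hlt) (le_of_lt hmn)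
          have h2 : R m ≤ R (m + 1) := stepUp m hmn (hP m hmn)
          linarith
        · have : k₁ = m + 1 := le_antisymm h12 hge
          simp [this]
    · intro k₁ k₂ h1 h2 h3
      have : k₁ = k₂ := le_antisymm h2 (le_trans h3 h1)
      simp [this]
  case pos =>
    set kstar := Nat.find hP with hkdef
    have hks : kstar < n := (Nat.find_spec hP).choose
    refine ⟨kstar, le_of_lt hks, ?_, ?_⟩
    · -- nondecreasing up to kstar
      intro k₁ k₂ h12 h2s
      induction k₂ with
      | zero => simp_all
      | succ m ih =>
        rcases Nat.lt_or_ge k₁ (m + 1) with hlt | hge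
        · have hms : m < kstar := Nat.lt_of_succ_le h2s
          have hmn : m < n := lt_trans hms hks
          have h1 : R k₁ ≤ R m := ih (Nat.lt_succ_iff.mp hlt) (le_of_lt hms)
          have hnot : ¬ ∃ h : m < n, u ⟨m, h⟩ / t ⟨m, h⟩ < R m := Nat.find_min hP hms
          push_neg at hnot
          have h2 : R m ≤ R (m + 1) := stepUp m hmn (hnot hmn)
          linarith
        · have : k₁ = m + 1 := le_antisymm h12 hge
          simp [this]
    · -- decreasing after kstar; invariant: profitability below rate
      have inv : ∀ d, ∀ h : kstar + d < n,
          u ⟨kstar + d, h⟩ / t ⟨kstar + d, h⟩ < R (kstar + d) := by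
        intro d
        induction d with
        | zero =>
          intro h
          obtain ⟨h', hq⟩ := Nat.find_spec hP
          exact hq
        | succ d ih =>
          intro h
          have hmn : kstar + d < n := by omega
          have hinv := ih hmn
          have h1 : u ⟨kstar + d, hmn⟩ / t ⟨kstar + d, hmn⟩ < R (kstar + d + 1) :=
            stepDown' (kstar + d) hmn hinv
          have h2 : u ⟨kstar + d + 1, h⟩ / t ⟨kstar + d + 1, h⟩
              ≤ u ⟨kstar + d, hmn⟩ / t ⟨kstar + d, hmn⟩ :=
            horder ⟨kstar + d, hmn⟩ ⟨kstar + d + 1, h⟩ (by simp [Fin.le_def])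
          show u ⟨kstar + d + 1, h⟩ / t ⟨kstar + d + 1, h⟩ < R (kstar + d + 1)
          linarith
      intro k₁ k₂ h1 h2 h3
      induction k₂ with
      | zero =>
        have : k₁ = 0 := Nat.le_zero.mp h2
        simp [this]
      | succ m ih =>
        rcases Nat.lt_or_ge k₁ (m + 1) with hlt | hge
        · have hmn : m < n := Nat.lt_of_succ_le h3
          have hsm : kstar ≤ m := le_trans h1 (Nat.lt_succ_iff.mp hlt)
          obtain ⟨d, hd⟩ := Nat.exists_eq_add_of_le hsm
          subst hd
          have hinv := inv d hmn
          have hdn : R (kstar + d + 1) < R (kstar + d) := stepDown (kstar + d) hmn hinv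
          have := ih (Nat.lt_succ_iff.mp hlt) (le_of_lt hmn)
          linarith
        · have : k₁ = m + 1 := le_antisymm h2 hge
          simp [this]
end

section
/- With items ordered by decreasing profitability uᵢ/tᵢ, the prefix diet D_{k*} attaining the maximum of R over prefixes in fact attains the maximum of R over all subsets D ⊆ {1,…,n}. -/
/-- Diet rate: R(D) = (∑_{i∈D} λᵢuᵢ)/(1 + ∑_{i∈D} λᵢtᵢ). -/
noncomputable def dietRate {n : ℕ} (l u t : Fin n → ℝ) (D : Finset (Fin n)) : ℝ :=
  (∑ i ∈ D, l i * u i) / (1 + ∑ i ∈ D, l i * t i)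

/-- The prefix diet {i : i < k}. -/
def prefixDiet (n k : ℕ) : Finset (Fin n) :=
  Finset.univ.filter (fun i : Fin n => (i : ℕ) < k)

/-- With items ordered by decreasing profitability, a prefix diet maximizing the rate
over prefixes in fact maximizes the rate over all subsets. -/
theorem greedy_prefix_optimal {n : ℕ} (l u t : Fin n → ℝ)
    (hl : ∀ i, 0 < l i) (hu : ∀ i, 0 ≤ u i) (ht : ∀ i, 0 < t i)
    (horder : ∀ i j : Fin n, i ≤ j → u j / t j ≤ u i / t i)
    (kstar : ℕ) (hk : kstar ≤ n)
    (hmaxpref : ∀ k ≤ n, dietRate l u t (prefixDiet n k) ≤ dietRate l u t (prefixDiet n kstar)) :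
    ∀ D : Finset (Fin n), dietRate l u t D ≤ dietRate l u t (prefixDiet n kstar) := by
  intro D
  set R := dietRate l u t (prefixDiet n kstar) with hR
  have hdenom : ∀ E : Finset (Fin n), 0 < 1 + ∑ i ∈ E, l i * t i := by
    intro E
    have h : 0 ≤ ∑ i ∈ E, l i * t i :=
      Finset.sum_nonneg fun i _ => le_of_lt (mul_pos (hl i) (ht i))
    linarith
  have hRnonneg : 0 ≤ R := by
    rw [hR, dietRate]
    exact div_nonneg (Finset.sum_nonneg fun i _ => mul_nonneg (hl i).le (hu i)) (hdenom _).le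
  set f : Fin n → ℝ := fun i => l i * u i - R * (l i * t i) with hf
  have key : ∀ E : Finset (Fin n), dietRate l u t E ≤ R ↔ ∑ i ∈ E, f i ≤ R := by
    intro E
    rw [dietRate, div_le_iff₀ (hdenom E)]
    have hsum : ∑ i ∈ E, f i = (∑ i ∈ E, l i * u i) - R * ∑ i ∈ E, l i * t i := by
      rw [Finset.sum_sub_distrib, Finset.mul_sum]
    rw [hsum, mul_add, mul_one]
    constructor <;> intro h <;> linarith
  have hfsign : ∀ i : Fin n, 0 ≤ f i ↔ R ≤ u i / t i := by
    intro i
    have h1 : 0 ≤ f i ↔ R * t i ≤ u i := by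
      simp only [hf]
      constructor <;> intro h <;> nlinarith [hl i, ht i, mul_pos (hl i) (ht i)]
    rw [h1, le_div_iff₀ (ht i)]
  set P : Finset (Fin n) := Finset.univ.filter (fun i => R ≤ u i / t i) with hPdef
  have hPmem : ∀ i : Fin n, i ∈ P ↔ R ≤ u i / t i := by
    intro i; simp [hPdef]
  have hPcard : P.card ≤ n := by
    calc P.card ≤ Finset.univ.card := Finset.card_filter_le _ _
    _ = n := Finset.card_fin n
  have hP_prefix : P = prefixDiet n P.card := by
    ext i
    simp only [prefixDiet, Finset.mem_filter, Finset.mem_univ, true_and, hPmem]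
    constructor
    · intro hi
      have hsub : Finset.Iic i ⊆ P := by
        intro j hj
        rw [hPmem]
        exact le_trans hi (horder j i (Finset.mem_Iic.mp hj))
      have := Finset.card_le_card hsub
      rw [Fin.card_Iic] at this
      omega
    · intro hi
      by_contra hnot
      have hsub : P ⊆ Finset.Iio i := by
        intro j hj
        rw [Finset.mem_Iio]
        by_contra hji
        push_neg at hji
        exact hnot (le_trans ((hPmem j).mp hj) (horder i j hji))
      have := Finset.card_le_card hsub
      rw [Fin.card_Iio] at this
      omega
  have h1 : ∑ i ∈ D, f i ≤ ∑ i ∈ D ∩ P, f i := by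
    have hdec : ∑ i ∈ D ∩ P, f i + ∑ i ∈ D \ P, f i = ∑ i ∈ D, f i :=
      Finset.sum_inter_add_sum_sdiff D P f
    have hneg : ∑ i ∈ D \ P, f i ≤ 0 := by
      apply Finset.sum_nonpos
      intro i hi
      have : i ∉ P := (Finset.mem_sdiff.mp hi).2
      rw [hPmem] at this
      by_contra h
      push_neg at h
      exact this ((hfsign i).mp h.le)
    linarith
  have h2 : ∑ i ∈ D ∩ P, f i ≤ ∑ i ∈ P, f i := by
    apply Finset.sum_le_sum_of_subset_of_nonneg (Finset.inter_subset_right)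
    intro i hi _
    exact (hfsign i).mpr ((hPmem i).mp hi)
  have h3 : ∑ i ∈ P, f i ≤ R := by
    rw [hP_prefix]
    exact (key _).mp (hmaxpref P.card hPcard)
  exact (key D).mpr (by linarith)
end
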